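/- Let U ⊆ ℝ² be an open set, let d₁, d₂ : U → ℝ be twice continuously differentiable functions that vanish nowhere, set l = d₁ + d₂, and suppose ∂l/∂x(x,y) = coth(d₁(x,y)) and ∂l/∂y(x,y) = coth(d₂(x,y)) for all (x,y) ∈ U. Define H : U → ℝ by H(x,y) = log(sinh²(d₁(x,y))/sinh²(d₂(x,y))). Then for all (x,y) ∈ U, e^{H}·∂H/∂x + ∂H/∂y = 2(e^{H} − 1) and ∂H/∂x + e^{−H}·∂H/∂y = 2(1 − e^{−H}). -/

import Mathlib

noncomputable def coth (t : ℝ) : ℝ := Real.cosh t / Real.sinh t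

lemma coth_hasDerivAt {t : ℝ} (ht : t ≠ 0) :
    HasDerivAt coth (-(1 / Real.sinh t ^ 2)) t := by
  have hs : Real.sinh t ≠ 0 := Real.sinh_ne_zero.2 ht
  have h := (Real.hasDerivAt_cosh t).div (Real.hasDerivAt_sinh t) hs
  convert h using 1
  have := Real.cosh_sq t
  any_goals rfl
  field_simp
  nlinarith [Real.cosh_sq t]

lemma deriv_fst_eq {f : ℝ × ℝ → ℝ} {q : ℝ × ℝ} (hf : DifferentiableAt ℝ f q) :
    deriv (fun t => f (t, q.2)) q.1 = fderiv ℝ f q (1, 0) := by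
  have h : HasDerivAt (fun t : ℝ => (t, q.2)) ((1 : ℝ), (0 : ℝ)) q.1 :=
    (hasDerivAt_id q.1).prodMk (hasDerivAt_const q.1 q.2)
  exact (hf.hasFDerivAt.comp_hasDerivAt q.1 h).deriv

lemma deriv_snd_eq {f : ℝ × ℝ → ℝ} {q : ℝ × ℝ} (hf : DifferentiableAt ℝ f q) :
    deriv (fun s => f (q.1, s)) q.2 = fderiv ℝ f q (0, 1) := by
  have h : HasDerivAt (fun s : ℝ => (q.1, s)) ((0 : ℝ), (1 : ℝ)) q.2 :=
    (hasDerivAt_const q.2 q.1).prodMk (hasDerivAt_id q.2)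
  exact (hf.hasFDerivAt.comp_hasDerivAt q.2 h).deriv

lemma fderiv_apply_comm {f : ℝ × ℝ → ℝ} {p : ℝ × ℝ} (hf : DifferentiableAt ℝ (fderiv ℝ f) p)
    (v w : ℝ × ℝ) :
    fderiv ℝ (fun q => fderiv ℝ f q v) p w = fderiv ℝ (fderiv ℝ f) p w v := by
  have h := ((ContinuousLinearMap.apply ℝ ℝ v).hasFDerivAt.comp p hf.hasFDerivAt)
  have h2 : fderiv ℝ (fun q => fderiv ℝ f q v) p
      = (ContinuousLinearMap.apply ℝ ℝ v).comp (fderiv ℝ (fderiv ℝ f) p) := h.fderiv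
  rw [h2]; rfl

/-- For a discrete conformal structure on an edge, the function
`H = log(sinh² d₁ / sinh² d₂)` satisfies
`e^H ∂H/∂x + ∂H/∂y = 2(e^H − 1)` and `∂H/∂x + e^{−H} ∂H/∂y = 2(1 − e^{−H})`. -/
theorem H_first_order_equations (U : Set (ℝ × ℝ)) (hU : IsOpen U)
    (d₁ d₂ : ℝ × ℝ → ℝ)
    (hd₁C2 : ContDiffOn ℝ 2 d₁ U) (hd₂C2 : ContDiffOn ℝ 2 d₂ U)
    (hd₁ne : ∀ p ∈ U, d₁ p ≠ 0) (hd₂ne : ∀ p ∈ U, d₂ p ≠ 0)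
    (l : ℝ × ℝ → ℝ) (hl : l = d₁ + d₂)
    (hlx : ∀ p ∈ U, deriv (fun t => l (t, p.2)) p.1 = coth (d₁ p))
    (hly : ∀ p ∈ U, deriv (fun s => l (p.1, s)) p.2 = coth (d₂ p))
    (H : ℝ × ℝ → ℝ)
    (hH : H = fun p => Real.log (Real.sinh (d₁ p) ^ 2 / Real.sinh (d₂ p) ^ 2)) :
    ∀ p ∈ U,
      (Real.exp (H p) * deriv (fun t => H (t, p.2)) p.1
          + deriv (fun s => H (p.1, s)) p.2 = 2 * (Real.exp (H p) - 1)) ∧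
      (deriv (fun t => H (t, p.2)) p.1
          + Real.exp (-H p) * deriv (fun s => H (p.1, s)) p.2
        = 2 * (1 - Real.exp (-H p))) := by
  subst hl
  intro p hp
  have hs1 : Real.sinh (d₁ p) ≠ 0 := Real.sinh_ne_zero.2 (hd₁ne p hp)
  have hs2 : Real.sinh (d₂ p) ≠ 0 := Real.sinh_ne_zero.2 (hd₂ne p hp)
  -- differentiability
  have hd1q : ∀ q ∈ U, DifferentiableAt ℝ d₁ q := fun q hq =>
    (hd₁C2.contDiffAt (hU.mem_nhds hq)).differentiableAt two_ne_zero
  have hd2q : ∀ q ∈ U, DifferentiableAt ℝ d₂ q := fun q hq =>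
    (hd₂C2.contDiffAt (hU.mem_nhds hq)).differentiableAt two_ne_zero
  have hlq : ∀ q ∈ U, DifferentiableAt ℝ (d₁ + d₂) q := fun q hq =>
    (hd1q q hq).add (hd2q q hq)
  have hlC2 : ContDiffAt ℝ 2 (d₁ + d₂) p :=
    (hd₁C2.contDiffAt (hU.mem_nhds hp)).add (hd₂C2.contDiffAt (hU.mem_nhds hp))
  have hDl : DifferentiableAt ℝ (fderiv ℝ (d₁ + d₂)) p :=
    (hlC2.fderiv_right (m := 1) (by norm_num)).differentiableAt one_ne_zero
  have hsym : IsSymmSndFDerivAt ℝ (d₁ + d₂) p := hlC2.isSymmSndFDerivAt (by simp)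
  -- partial derivatives of l as fderiv
  have hfx : ∀ q ∈ U, fderiv ℝ (d₁ + d₂) q (1, 0) = coth (d₁ q) := fun q hq => by
    rw [← deriv_fst_eq (hlq q hq)]; exact hlx q hq
  have hfy : ∀ q ∈ U, fderiv ℝ (d₁ + d₂) q (0, 1) = coth (d₂ q) := fun q hq => by
    rw [← deriv_snd_eq (hlq q hq)]; exact hly q hq
  have hev1 : (fun q => fderiv ℝ (d₁ + d₂) q ((1 : ℝ), (0 : ℝ)))
      =ᶠ[nhds p] (fun q => coth (d₁ q)) := by
    filter_upwards [hU.mem_nhds hp] with q hq using hfx q hq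
  have hev2 : (fun q => fderiv ℝ (d₁ + d₂) q ((0 : ℝ), (1 : ℝ)))
      =ᶠ[nhds p] (fun q => coth (d₂ q)) := by
    filter_upwards [hU.mem_nhds hp] with q hq using hfy q hq
  -- derivatives of coth ∘ dᵢ
  have hcd1 : HasFDerivAt (fun q => coth (d₁ q))
      ((-(1 / Real.sinh (d₁ p) ^ 2)) • fderiv ℝ d₁ p) p :=
    (coth_hasDerivAt (hd₁ne p hp)).comp_hasFDerivAt p (hd1q p hp).hasFDerivAt
  have hcd2 : HasFDerivAt (fun q => coth (d₂ q))
      ((-(1 / Real.sinh (d₂ p) ^ 2)) • fderiv ℝ d₂ p) p :=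
    (coth_hasDerivAt (hd₂ne p hp)).comp_hasFDerivAt p (hd2q p hp).hasFDerivAt
  -- abbreviations
  set s₁ := Real.sinh (d₁ p) with hs₁def
  set s₂ := Real.sinh (d₂ p) with hs₂def
  set c₁ := coth (d₁ p) with hc₁def
  set c₂ := coth (d₂ p) with hc₂def
  set A := fderiv ℝ d₁ p ((1 : ℝ), (0 : ℝ)) with hAdef
  set B := fderiv ℝ d₁ p ((0 : ℝ), (1 : ℝ)) with hBdef
  set A₂ := fderiv ℝ d₂ p ((1 : ℝ), (0 : ℝ)) with hA₂def
  set B₂ := fderiv ℝ d₂ p ((0 : ℝ), (1 : ℝ)) with hB₂def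
  -- symmetry of second derivatives
  have key1 : fderiv ℝ (fderiv ℝ (d₁ + d₂)) p (0, 1) (1, 0) = -(1 / s₁ ^ 2) * B := by
    rw [← fderiv_apply_comm hDl (1, 0) (0, 1), hev1.fderiv_eq, hcd1.fderiv]
    simp [smul_eq_mul, hBdef]
  have key2 : fderiv ℝ (fderiv ℝ (d₁ + d₂)) p (1, 0) (0, 1) = -(1 / s₂ ^ 2) * A₂ := by
    rw [← fderiv_apply_comm hDl (0, 1) (1, 0), hev2.fderiv_eq, hcd2.fderiv]
    simp [smul_eq_mul, hA₂def]
  have hSym : -(1 / s₁ ^ 2) * B = -(1 / s₂ ^ 2) * A₂ := by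
    rw [← key1, ← key2]; exact hsym.eq _ _
  -- sum of partial derivatives
  have hsumf : fderiv ℝ (d₁ + d₂) p = fderiv ℝ d₁ p + fderiv ℝ d₂ p :=
    fderiv_add (hd1q p hp) (hd2q p hp)
  have hAx : A + A₂ = c₁ := by
    have := hfx p hp; rw [hsumf] at this; simpa using this
  have hBy : B + B₂ = c₂ := by
    have := hfy p hp; rw [hsumf] at this; simpa using this
  -- derivative of H
  have hF1 : HasDerivAt (fun t => Real.log (Real.sinh t ^ 2)) (2 * c₁) (d₁ p) := by
    have h := ((Real.hasDerivAt_sinh (d₁ p)).pow 2).log (pow_ne_zero 2 hs1)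
    convert h using 1
    any_goals rfl
    rw [hc₁def]
    unfold coth
    rw [Pi.pow_apply, ← hs₁def]
    field_simp
    ring
  have hF2 : HasDerivAt (fun t => Real.log (Real.sinh t ^ 2)) (2 * c₂) (d₂ p) := by
    have h := ((Real.hasDerivAt_sinh (d₂ p)).pow 2).log (pow_ne_zero 2 hs2)
    convert h using 1
    any_goals rfl
    rw [hc₂def]
    unfold coth
    rw [Pi.pow_apply, ← hs₂def]
    field_simp
    ring
  have hG : HasFDerivAt
      (fun q => Real.log (Real.sinh (d₁ q) ^ 2) - Real.log (Real.sinh (d₂ q) ^ 2))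
      ((2 * c₁) • fderiv ℝ d₁ p - (2 * c₂) • fderiv ℝ d₂ p) p :=
    (hF1.comp_hasFDerivAt p (hd1q p hp).hasFDerivAt).sub
      (hF2.comp_hasFDerivAt p (hd2q p hp).hasFDerivAt)
  have hHev : H =ᶠ[nhds p]
      (fun q => Real.log (Real.sinh (d₁ q) ^ 2) - Real.log (Real.sinh (d₂ q) ^ 2)) := by
    filter_upwards [hU.mem_nhds hp] with q hq
    rw [hH]
    exact Real.log_div (pow_ne_zero 2 (Real.sinh_ne_zero.2 (hd₁ne q hq)))
      (pow_ne_zero 2 (Real.sinh_ne_zero.2 (hd₂ne q hq)))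
  have hHd : HasFDerivAt H ((2 * c₁) • fderiv ℝ d₁ p - (2 * c₂) • fderiv ℝ d₂ p) p :=
    hG.congr_of_eventuallyEq hHev
  have hHx : deriv (fun t => H (t, p.2)) p.1 = 2 * c₁ * A - 2 * c₂ * A₂ := by
    rw [deriv_fst_eq hHd.differentiableAt, hHd.fderiv]
    simp [smul_eq_mul, hAdef, hA₂def]
  have hHy : deriv (fun s => H (p.1, s)) p.2 = 2 * c₁ * B - 2 * c₂ * B₂ := by
    rw [deriv_snd_eq hHd.differentiableAt, hHd.fderiv]
    simp [smul_eq_mul, hBdef, hB₂def]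
  -- value of exp (H p)
  have hEexp : Real.exp (H p) = s₁ ^ 2 / s₂ ^ 2 := by
    rw [hH]
    exact Real.exp_log (by positivity)
  -- algebraic identities
  have hc1 : c₁ ^ 2 = 1 + 1 / s₁ ^ 2 := by
    rw [hc₁def]; unfold coth; rw [← hs₁def, div_pow, Real.cosh_sq, ← hs₁def]
    field_simp
  have hc2 : c₂ ^ 2 = 1 + 1 / s₂ ^ 2 := by
    rw [hc₂def]; unfold coth; rw [← hs₂def, div_pow, Real.cosh_sq, ← hs₂def]
    field_simp
  have key : (s₁ ^ 2 / s₂ ^ 2) * c₁ ^ 2 - s₁ ^ 2 / s₂ ^ 2 = c₂ ^ 2 - 1 := by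
    rw [hc1, hc2]
    field_simp
    ring
  have hA₂' : A₂ = c₁ - A := by linarith
  have hB₂' : B₂ = c₂ - B := by linarith
  have hB' : B = s₁ ^ 2 / s₂ ^ 2 * (c₁ - A) := by
    rw [hA₂'] at hSym
    field_simp at hSym ⊢
    linarith
  have eq1 : Real.exp (H p) * deriv (fun t => H (t, p.2)) p.1
      + deriv (fun s => H (p.1, s)) p.2 = 2 * (Real.exp (H p) - 1) := by
    rw [hHx, hHy, hEexp, hA₂', hB₂', hB']
    linear_combination 2 * key
  refine ⟨eq1, ?_⟩
  have hEne : Real.exp (H p) ≠ 0 := Real.exp_ne_zero _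
  rw [Real.exp_neg]
  field_simp
  linarith [eq1]
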